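/- Let j ≥ 2 and let f ∈ C([0,1]²) be such that for every fixed y ∈ [0,1] the function x ↦ f(x,y) is increasing with x ↦ f(x^{1/j}, y) convex, and for every fixed x ∈ [0,1] the function y ↦ f(x,y) is increasing with y ↦ f(x, y^{1/j}) convex. Then f ≤ B_{n,m,j} f ≤ B_{n,m} f pointwise on [0,1]² for all n, m ≥ j. -/

import Mathlib

open Set Finset

/-- Bernstein basis polynomial `p_{n,k}(x) = C(n,k) x^k (1-x)^{n-k}`. -/
noncomputable def bp (n k : ℕ) (x : ℝ) : ℝ :=
  (n.choose k : ℝ) * x ^ k * (1 - x) ^ (n - k)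

/-- AKR node `t_{n,k}^j = (k(k-1)⋯(k-j+1)/(n(n-1)⋯(n-j+1)))^{1/j}`. -/
noncomputable def akrNode (n j k : ℕ) : ℝ :=
  ((∏ i ∈ Finset.range j, ((k : ℝ) - i)) / (∏ i ∈ Finset.range j, ((n : ℝ) - i))) ^ ((j : ℝ)⁻¹)

/-- Classical Bernstein operator. -/
noncomputable def bern (n : ℕ) (f : ℝ → ℝ) (x : ℝ) : ℝ :=
  ∑ k ∈ Finset.range (n + 1), f ((k : ℝ) / n) * bp n k x

/-- Aldaz–Kounchev–Render operator. -/
noncomputable def akr (n j : ℕ) (f : ℝ → ℝ) (x : ℝ) : ℝ :=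
  ∑ k ∈ Finset.range (n + 1), f (akrNode n j k) * bp n k x

/-- Bivariate tensor-product Bernstein operator. -/
noncomputable def bern2 (n m : ℕ) (f : ℝ → ℝ → ℝ) (x y : ℝ) : ℝ :=
  ∑ i ∈ Finset.range (n + 1), ∑ k ∈ Finset.range (m + 1),
    f ((i : ℝ) / n) ((k : ℝ) / m) * bp n i x * bp m k y

/-- Bivariate tensor-product AKR operator. -/
noncomputable def akr2 (n m j : ℕ) (f : ℝ → ℝ → ℝ) (x y : ℝ) : ℝ :=
  ∑ i ∈ Finset.range (n + 1), ∑ k ∈ Finset.range (m + 1),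
    f (akrNode n j i) (akrNode m j k) * bp n i x * bp m k y

lemma bp_nonneg {n k : ℕ} {x : ℝ} (hx : x ∈ Set.Icc (0:ℝ) 1) : 0 ≤ bp n k x :=
  mul_nonneg (mul_nonneg (Nat.cast_nonneg _) (pow_nonneg hx.1 _))
    (pow_nonneg (by linarith [hx.2]) _)

lemma bp_sum (n : ℕ) (x : ℝ) : ∑ k ∈ Finset.range (n + 1), bp n k x = 1 := by
  calc ∑ k ∈ Finset.range (n+1), bp n k x
      = ∑ k ∈ Finset.range (n+1), x ^ k * (1-x)^(n-k) * (n.choose k : ℝ) := by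
        refine Finset.sum_congr rfl fun k _ => ?_
        unfold bp; ring
    _ = (x + (1-x))^n := (add_pow x (1-x) n).symm
    _ = 1 := by norm_num

lemma prod_cast {j k : ℕ} (h : j ≤ k) :
    (∏ i ∈ Finset.range j, ((k : ℝ) - i)) = (k.descFactorial j : ℝ) := by
  rw [Nat.descFactorial_eq_prod_range, Nat.cast_prod]
  refine Finset.prod_congr rfl fun i hi => ?_
  rw [Nat.cast_sub (le_of_lt (lt_of_lt_of_le (Finset.mem_range.mp hi) h))]

lemma nat_key {j n l : ℕ} (h : j + l ≤ n) :
    (j + l).descFactorial j * n.choose (j + l) = n.descFactorial j * (n - j).choose l := by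
  have h3 := Nat.choose_mul (n := n) (Nat.le_add_right j l)
  rw [Nat.add_sub_cancel_left] at h3
  rw [Nat.descFactorial_eq_factorial_mul_choose (j+l) j,
      Nat.descFactorial_eq_factorial_mul_choose n j, Nat.mul_assoc, Nat.mul_assoc]
  congr 1
  rw [Nat.mul_comm, h3]

lemma key_sum (j n : ℕ) (hn : j ≤ n) (x : ℝ) :
    ∑ k ∈ Finset.range (n + 1), (∏ i ∈ Finset.range j, ((k : ℝ) - i)) * bp n k x
      = (∏ i ∈ Finset.range j, ((n : ℝ) - i)) * x ^ j := by
  have hzero : ∀ k ∈ Finset.range (n+1), k ∉ Finset.Ico j (n+1) →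
      (∏ i ∈ Finset.range j, ((k : ℝ) - i)) * bp n k x = 0 := by
    intro k hk hk'
    have hkj : k < j := by
      simp only [Finset.mem_range] at hk
      simp only [Finset.mem_Ico] at hk'
      omega
    have : (∏ i ∈ Finset.range j, ((k : ℝ) - i)) = 0 :=
      Finset.prod_eq_zero (Finset.mem_range.mpr hkj) (by simp)
    rw [this, zero_mul]
  rw [← Finset.sum_subset (by rw [Finset.range_eq_Ico]; exact Finset.Ico_subset_Ico (Nat.zero_le j) le_rfl) hzero,
     Finset.sum_Ico_eq_sum_range]
  have hrange : n + 1 - j = n - j + 1 := by omega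
  rw [hrange]
  have hterm : ∀ l ∈ Finset.range (n - j + 1),
      (∏ i ∈ Finset.range j, (((j + l : ℕ) : ℝ) - i)) * bp n (j + l) x
        = ((n.descFactorial j : ℝ) * x ^ j) * (((n - j).choose l : ℝ) * x ^ l * (1 - x) ^ ((n - j) - l)) := by
    intro l hl
    have hl' : j + l ≤ n := by
      have := Finset.mem_range.mp hl; omega
    rw [prod_cast (Nat.le_add_right j l)]
    unfold bp
    have hsub : n - (j + l) = (n - j) - l := by omega
    have hcast : ((j + l).descFactorial j : ℝ) * (n.choose (j + l) : ℝ)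
        = (n.descFactorial j : ℝ) * ((n - j).choose l : ℝ) := by
      exact_mod_cast congrArg (Nat.cast : ℕ → ℝ) (nat_key hl')
    rw [hsub, pow_add]
    linear_combination (x ^ j * x ^ l * (1 - x) ^ ((n - j) - l)) * hcast
  rw [Finset.sum_congr rfl hterm, ← Finset.mul_sum]
  have hone := bp_sum (n - j) x
  unfold bp at hone
  rw [hone, mul_one, prod_cast hn]

lemma denom_pos {j n : ℕ} (hn : j ≤ n) : (0:ℝ) < ∏ i ∈ Finset.range j, ((n : ℝ) - i) := by
  apply Finset.prod_pos
  intro i hi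
  have : i < j := Finset.mem_range.mp hi
  have : (i:ℝ) < (n:ℝ) := by exact_mod_cast lt_of_lt_of_le this hn
  linarith

lemma num_nonneg {j k : ℕ} : (0:ℝ) ≤ ∏ i ∈ Finset.range j, ((k : ℝ) - i) := by
  rcases lt_or_ge k j with h | h
  · rw [Finset.prod_eq_zero (Finset.mem_range.mpr h) (by simp)]
  · rw [prod_cast h]; positivity

lemma ratio_nonneg {j n k : ℕ} (hn : j ≤ n) :
    (0:ℝ) ≤ (∏ i ∈ Finset.range j, ((k : ℝ) - i)) / (∏ i ∈ Finset.range j, ((n : ℝ) - i)) :=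
  div_nonneg num_nonneg (denom_pos hn).le

lemma ratio_le_one {j n k : ℕ} (hn : j ≤ n) (hk : k ≤ n) :
    (∏ i ∈ Finset.range j, ((k : ℝ) - i)) / (∏ i ∈ Finset.range j, ((n : ℝ) - i)) ≤ 1 := by
  rw [div_le_one (denom_pos hn)]
  rcases lt_or_ge k j with h | h
  · rw [Finset.prod_eq_zero (Finset.mem_range.mpr h) (by simp)]
    exact (denom_pos hn).le
  · apply Finset.prod_le_prod
    · intro i hi
      have hij : i < j := Finset.mem_range.mp hi
      have : (i:ℝ) < (k:ℝ) := by exact_mod_cast lt_of_lt_of_le hij h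
      linarith
    · intro i hi
      have : (k:ℝ) ≤ (n:ℝ) := by exact_mod_cast hk
      linarith

lemma ratio_le_pow {j n k : ℕ} (hj : 1 ≤ j) (hn : j ≤ n) (hk : k ≤ n) :
    (∏ i ∈ Finset.range j, ((k : ℝ) - i)) / (∏ i ∈ Finset.range j, ((n : ℝ) - i))
      ≤ ((k : ℝ) / n) ^ j := by
  have hnpos : (0:ℝ) < n := by
    have : (0:ℕ) < n := lt_of_lt_of_le hj hn
    exact_mod_cast this
  rcases lt_or_ge k j with h | h
  · rw [Finset.prod_eq_zero (Finset.mem_range.mpr h) (by simp), zero_div]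
    positivity
  · rw [div_le_iff₀ (denom_pos hn),
      show ((k:ℝ)/n) ^ j = ∏ _i ∈ Finset.range j, ((k:ℝ)/n) by
        rw [Finset.prod_const, Finset.card_range],
      ← Finset.prod_mul_distrib]
    apply Finset.prod_le_prod
    · intro i hi
      have hij : i < j := Finset.mem_range.mp hi
      have : (i:ℝ) < (k:ℝ) := by exact_mod_cast lt_of_lt_of_le hij h
      linarith
    · intro i hi
      have hij : i < j := Finset.mem_range.mp hi
      have h1 : (i:ℝ) < (n:ℝ) := by exact_mod_cast lt_of_lt_of_le hij hn
      have h2 : (k:ℝ) ≤ (n:ℝ) := by exact_mod_cast hk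
      have h3 : (0:ℝ) ≤ (i:ℝ) := Nat.cast_nonneg i
      rw [div_mul_eq_mul_div, le_div_iff₀ hnpos]
      nlinarith

lemma akrNode_mem {j n k : ℕ} (hn : j ≤ n) (hk : k ≤ n) :
    akrNode n j k ∈ Set.Icc (0:ℝ) 1 := by
  unfold akrNode
  constructor
  · exact Real.rpow_nonneg (ratio_nonneg hn) _
  · exact Real.rpow_le_one (ratio_nonneg hn) (ratio_le_one hn hk) (by positivity)

lemma akrNode_le {j n k : ℕ} (hj : 1 ≤ j) (hn : j ≤ n) (hk : k ≤ n) :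
    akrNode n j k ≤ (k : ℝ) / n := by
  have hjR : ((j:ℝ)) ≠ 0 := by exact_mod_cast Nat.one_le_iff_ne_zero.mp hj
  have hnpos : (0:ℝ) < n := by
    have : (0:ℕ) < n := lt_of_lt_of_le hj hn
    exact_mod_cast this
  have hkn : (0:ℝ) ≤ (k:ℝ)/n := by positivity
  calc akrNode n j k
      ≤ (((k:ℝ)/n) ^ j) ^ ((j:ℝ)⁻¹) :=
        Real.rpow_le_rpow (ratio_nonneg hn) (ratio_le_pow hj hn hk) (by positivity)
    _ = (k:ℝ)/n := by
        rw [← Real.rpow_natCast ((k:ℝ)/n) j, ← Real.rpow_mul hkn,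
          mul_inv_cancel₀ hjR, Real.rpow_one]

lemma pow_rpow_inv {j : ℕ} (hj : 1 ≤ j) {x : ℝ} (hx : 0 ≤ x) :
    (x ^ j) ^ ((j:ℝ)⁻¹) = x := by
  have hjR : ((j:ℝ)) ≠ 0 := by exact_mod_cast Nat.one_le_iff_ne_zero.mp hj
  rw [← Real.rpow_natCast x j, ← Real.rpow_mul hx, mul_inv_cancel₀ hjR, Real.rpow_one]

lemma le_akr {j n : ℕ} (hj : 1 ≤ j) (hn : j ≤ n) (g : ℝ → ℝ)
    (hconv : ConvexOn ℝ (Set.Icc 0 1) (fun u => g (u ^ ((j:ℝ)⁻¹)))) {x : ℝ}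
    (hx : x ∈ Set.Icc (0:ℝ) 1) : g x ≤ akr n j g x := by
  set π : ℕ → ℝ := fun k =>
    (∏ i ∈ Finset.range j, ((k:ℝ) - i)) / (∏ i ∈ Finset.range j, ((n:ℝ) - i)) with hπ
  have jensen := hconv.map_sum_le (t := Finset.range (n+1)) (w := fun k => bp n k x) (p := π)
    (fun k _ => bp_nonneg hx) (bp_sum n x)

    (fun k hk => by
      have hk' : k ≤ n := by have := Finset.mem_range.mp hk; omega
      exact ⟨ratio_nonneg hn, ratio_le_one hn hk'⟩)
  have hsum : ∑ k ∈ Finset.range (n+1), bp n k x • π k = x ^ j := by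
    have hD := denom_pos (n := n) hn
    have : ∑ k ∈ Finset.range (n+1), bp n k x • π k
        = (∑ k ∈ Finset.range (n+1), (∏ i ∈ Finset.range j, ((k:ℝ) - i)) * bp n k x)
          / (∏ i ∈ Finset.range j, ((n:ℝ) - i)) := by
      rw [Finset.sum_div]
      refine Finset.sum_congr rfl fun k _ => ?_
      rw [smul_eq_mul, hπ]
      field_simp
    rw [this, key_sum j n hn x, mul_comm, mul_div_assoc, div_self hD.ne', mul_one]
  rw [hsum] at jensen
  have hgx : g x = g ((x ^ j) ^ ((j:ℝ)⁻¹)) := by rw [pow_rpow_inv hj hx.1]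
  rw [hgx]
  refine le_trans jensen (le_of_eq ?_)
  unfold akr
  refine Finset.sum_congr rfl fun k _ => ?_
  rw [smul_eq_mul, mul_comm]
  rfl

lemma akr_le_bern {j n : ℕ} (hj : 1 ≤ j) (hn : j ≤ n) (g : ℝ → ℝ)
    (hmono : MonotoneOn g (Set.Icc 0 1)) {x : ℝ} (hx : x ∈ Set.Icc (0:ℝ) 1) :
    akr n j g x ≤ bern n g x := by
  have hnpos : (0:ℝ) < n := by
    have : (0:ℕ) < n := lt_of_lt_of_le hj hn
    exact_mod_cast this
  apply Finset.sum_le_sum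
  intro k hk
  have hk' : k ≤ n := by have := Finset.mem_range.mp hk; omega
  have h2 : (k:ℝ)/n ∈ Set.Icc (0:ℝ) 1 := by
    constructor
    · positivity
    · rw [div_le_one hnpos]; exact_mod_cast hk'
  exact mul_le_mul_of_nonneg_right
    (hmono (akrNode_mem hn hk') h2 (akrNode_le hj hn hk')) (bp_nonneg hx)

lemma nest_sum (n m : ℕ) (F : ℕ → ℕ → ℝ) (x y : ℝ) :
    ∑ i ∈ Finset.range (n+1), (∑ k ∈ Finset.range (m+1), F i k * bp m k y) * bp n i x
      = ∑ i ∈ Finset.range (n+1), ∑ k ∈ Finset.range (m+1), F i k * bp n i x * bp m k y := by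
  refine Finset.sum_congr rfl fun i _ => ?_
  rw [Finset.sum_mul]
  exact Finset.sum_congr rfl fun k _ => by ring

lemma swap_sum (n m : ℕ) (F : ℕ → ℕ → ℝ) (x y : ℝ) :
    ∑ k ∈ Finset.range (m+1), (∑ i ∈ Finset.range (n+1), F i k * bp n i x) * bp m k y
      = ∑ i ∈ Finset.range (n+1), ∑ k ∈ Finset.range (m+1), F i k * bp n i x * bp m k y := by
  rw [show (∑ k ∈ Finset.range (m+1), (∑ i ∈ Finset.range (n+1), F i k * bp n i x) * bp m k y)
      = ∑ k ∈ Finset.range (m+1), ∑ i ∈ Finset.range (n+1), F i k * bp n i x * bp m k y by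
    refine Finset.sum_congr rfl fun k _ => ?_
    rw [Finset.sum_mul]]
  exact Finset.sum_comm

theorem stmt19 (j n m : ℕ) (hj : 2 ≤ j) (hn : j ≤ n) (hm : j ≤ m)
    (f : ℝ → ℝ → ℝ)
    (hfc : ContinuousOn (fun p : ℝ × ℝ => f p.1 p.2) (Set.Icc (0:ℝ) 1 ×ˢ Set.Icc (0:ℝ) 1))
    (hx : ∀ y ∈ Icc (0:ℝ) 1, MonotoneOn (fun x => f x y) (Icc 0 1) ∧
      ConvexOn ℝ (Icc 0 1) (fun x => f (x ^ ((j : ℝ)⁻¹)) y))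
    (hy : ∀ x ∈ Icc (0:ℝ) 1, MonotoneOn (fun y => f x y) (Icc 0 1) ∧
      ConvexOn ℝ (Icc 0 1) (fun y => f x (y ^ ((j : ℝ)⁻¹)))) :
    ∀ x ∈ Icc (0:ℝ) 1, ∀ y ∈ Icc (0:ℝ) 1,
      f x y ≤ akr2 n m j f x y ∧ akr2 n m j f x y ≤ bern2 n m f x y := by
  have hj1 : 1 ≤ j := le_trans one_le_two hj
  have hmR : (0:ℝ) < m := by
    have : (0:ℕ) < m := lt_of_lt_of_le hj1 hm
    exact_mod_cast this
  intro x hxm y hym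
  have hdivm : ∀ k, k ≤ m → (k:ℝ)/m ∈ Set.Icc (0:ℝ) 1 := by
    intro k hk
    exact ⟨by positivity, by rw [div_le_one hmR]; exact_mod_cast hk⟩
  constructor
  · -- f ≤ akr2
    have stepA : f x y ≤ akr m j (f x) y := le_akr hj1 hm (f x) (hy x hxm).2 hym
    have stepB : akr m j (f x) y ≤ akr2 n m j f x y := by
      have e : akr2 n m j f x y = ∑ k ∈ Finset.range (m+1),
          (∑ i ∈ Finset.range (n+1), f (akrNode n j i) (akrNode m j k) * bp n i x) * bp m k y :=
        (swap_sum n m (fun i k => f (akrNode n j i) (akrNode m j k)) x y).symm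
      rw [e]
      unfold akr
      apply Finset.sum_le_sum
      intro k hk
      have hk' : k ≤ m := by have := Finset.mem_range.mp hk; omega
      have hnode : akrNode m j k ∈ Set.Icc (0:ℝ) 1 := akrNode_mem hm hk'
      have h1 : f x (akrNode m j k) ≤ akr n j (fun u => f u (akrNode m j k)) x :=
        le_akr hj1 hn (fun u => f u (akrNode m j k)) (hx _ hnode).2 hxm
      exact mul_le_mul_of_nonneg_right h1 (bp_nonneg hym)
    exact le_trans stepA stepB
  · -- akr2 ≤ bern2
    have stepC : akr2 n m j f x y ≤ ∑ i ∈ Finset.range (n+1),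
        (bern m (f (akrNode n j i)) y) * bp n i x := by
      have e : akr2 n m j f x y = ∑ i ∈ Finset.range (n+1),
          (akr m j (f (akrNode n j i)) y) * bp n i x :=
        (nest_sum n m (fun i k => f (akrNode n j i) (akrNode m j k)) x y).symm
      rw [e]
      apply Finset.sum_le_sum
      intro i hi
      have hi' : i ≤ n := by have := Finset.mem_range.mp hi; omega
      have hnode : akrNode n j i ∈ Set.Icc (0:ℝ) 1 := akrNode_mem hn hi'
      exact mul_le_mul_of_nonneg_right
        (akr_le_bern hj1 hm (f (akrNode n j i)) (hy _ hnode).1 hym) (bp_nonneg hxm)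
    have stepD : ∑ i ∈ Finset.range (n+1), (bern m (f (akrNode n j i)) y) * bp n i x
        ≤ bern2 n m f x y := by
      have e1 : ∑ i ∈ Finset.range (n+1), (bern m (f (akrNode n j i)) y) * bp n i x
          = ∑ k ∈ Finset.range (m+1),
              (akr n j (fun u => f u ((k:ℝ)/m)) x) * bp m k y := by
        rw [show (∑ i ∈ Finset.range (n+1), (bern m (f (akrNode n j i)) y) * bp n i x)
            = ∑ i ∈ Finset.range (n+1), ∑ k ∈ Finset.range (m+1),
                f (akrNode n j i) ((k:ℝ)/m) * bp n i x * bp m k y from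
          nest_sum n m (fun i k => f (akrNode n j i) ((k:ℝ)/m)) x y]
        exact (swap_sum n m (fun i k => f (akrNode n j i) ((k:ℝ)/m)) x y).symm
      have e2 : ∑ k ∈ Finset.range (m+1),
            (bern n (fun u => f u ((k:ℝ)/m)) x) * bp m k y = bern2 n m f x y :=
        swap_sum n m (fun i k => f ((i:ℝ)/n) ((k:ℝ)/m)) x y
      rw [e1, ← e2]
      apply Finset.sum_le_sum
      intro k hk
      have hk' : k ≤ m := by have := Finset.mem_range.mp hk; omega
      exact mul_le_mul_of_nonneg_right
        (akr_le_bern hj1 hn (fun u => f u ((k:ℝ)/m)) (hx _ (hdivm k hk')).1 hxm)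
        (bp_nonneg hym)
    exact le_trans stepC stepD
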